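/- Let A = [[A11, A12],[A12†, A22]] be a Hermitian positive definite block matrix (with A22 positive definite). Then the Schur complement map A ↦ A11 − A12 A22⁻¹ A12† is concave on the set of such positive definite block matrices: for block matrices A, B (with positive definite lower-right blocks) and t ∈ [0,1], the Schur complement of tA + (1−t)B dominates (in the Loewner order) t times the Schur complement of A plus (1−t) times the Schur complement of B. -/

import Mathlib

open Matrix
open scoped ComplexOrder

private lemma smul_psd {k : Type*} [Fintype k] (c : ℝ) (hc : 0 ≤ c) {M : Matrix k k ℂ}
    (hM : M.PosSemidef) : ((c : ℂ) • M).PosSemidef := by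
  refine ⟨?_, fun x => ?_⟩
  · have h1 := hM.1
    unfold Matrix.IsHermitian at *
    rw [conjTranspose_smul, h1, Complex.star_def, Complex.conj_ofReal]
  · exact (hM.smul (by exact_mod_cast hc : (0:ℂ) ≤ (c:ℂ))).2 x

private lemma smul_pd {k : Type*} [Fintype k] (c : ℝ) (hc : 0 < c) {M : Matrix k k ℂ}
    (hM : M.PosDef) : ((c : ℂ) • M).PosDef := by
  refine ⟨?_, fun x hx => ?_⟩
  · have h1 := hM.1
    unfold Matrix.IsHermitian at *
    rw [conjTranspose_smul, h1, Complex.star_def, Complex.conj_ofReal]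
  · exact (hM.smul (by exact_mod_cast hc : (0:ℂ) < (c:ℂ))).2 hx

/-- Concavity of the Schur complement: for Hermitian positive definite block matrices
`A = [[A11, A12],[A12ᴴ, A22]]` and `B = [[B11, B12],[B12ᴴ, B22]]` (with positive definite
lower-right blocks) and `t ∈ [0,1]`, the Schur complement of `tA + (1−t)B` dominates, in
the Loewner order, `t` times the Schur complement of `A` plus `(1−t)` times the Schur
complement of `B`. -/
theorem stmt_3 {m n : ℕ}
    (A11 B11 : Matrix (Fin m) (Fin m) ℂ) (A12 B12 : Matrix (Fin m) (Fin n) ℂ)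
    (A22 B22 : Matrix (Fin n) (Fin n) ℂ)
    (hA : (Matrix.fromBlocks A11 A12 A12ᴴ A22).PosDef)
    (hB : (Matrix.fromBlocks B11 B12 B12ᴴ B22).PosDef)
    (hA22 : A22.PosDef) (hB22 : B22.PosDef)
    (t : ℝ) (ht0 : 0 ≤ t) (ht1 : t ≤ 1) :
    (((((t : ℂ) • A11 + ((1 - t : ℝ) : ℂ) • B11)
        - ((t : ℂ) • A12 + ((1 - t : ℝ) : ℂ) • B12)
          * ((t : ℂ) • A22 + ((1 - t : ℝ) : ℂ) • B22)⁻¹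
          * ((t : ℂ) • A12 + ((1 - t : ℝ) : ℂ) • B12)ᴴ))
      - ((t : ℂ) • (A11 - A12 * A22⁻¹ * A12ᴴ)
          + ((1 - t : ℝ) : ℂ) • (B11 - B12 * B22⁻¹ * B12ᴴ))).PosSemidef := by
  set C11 : Matrix (Fin m) (Fin m) ℂ := (t : ℂ) • A11 + ((1 - t : ℝ) : ℂ) • B11 with hC11
  set C12 : Matrix (Fin m) (Fin n) ℂ := (t : ℂ) • A12 + ((1 - t : ℝ) : ℂ) • B12 with hC12
  set C22 : Matrix (Fin n) (Fin n) ℂ := (t : ℂ) • A22 + ((1 - t : ℝ) : ℂ) • B22 with hC22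
  set S : Matrix (Fin m) (Fin m) ℂ := (t : ℂ) • (A11 - A12 * A22⁻¹ * A12ᴴ)
          + ((1 - t : ℝ) : ℂ) • (B11 - B12 * B22⁻¹ * B12ᴴ) with hS
  -- C22 is positive definite
  have hC22pd : C22.PosDef := by
    rcases lt_or_eq_of_le ht1 with h | h
    · exact Matrix.PosDef.posSemidef_add (smul_psd t ht0 hA22.posSemidef)
        (smul_pd (1 - t) (by linarith) hB22)
    · subst h
      simp only [hC22, sub_self, Complex.ofReal_zero, zero_smul, add_zero,
        Complex.ofReal_one, one_smul]
      exact hA22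
  have : Invertible C22 := hC22pd.isUnit.invertible
  have : Invertible A22 := hA22.isUnit.invertible
  have : Invertible B22 := hB22.isUnit.invertible
  have key : (C11 - S - C12 * C22⁻¹ * C12ᴴ).PosSemidef := by
    rw [← Matrix.PosDef.fromBlocks₂₂ _ _ hC22pd]
    have hXpsd : (Matrix.fromBlocks (A12 * A22⁻¹ * A12ᴴ) A12 A12ᴴ A22).PosSemidef := by
      rw [Matrix.PosDef.fromBlocks₂₂ _ _ hA22, sub_self]
      exact Matrix.PosSemidef.zero
    have hYpsd : (Matrix.fromBlocks (B12 * B22⁻¹ * B12ᴴ) B12 B12ᴴ B22).PosSemidef := by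
      rw [Matrix.PosDef.fromBlocks₂₂ _ _ hB22, sub_self]
      exact Matrix.PosSemidef.zero
    have heq : Matrix.fromBlocks (C11 - S) C12 C12ᴴ C22
        = (t : ℂ) • Matrix.fromBlocks (A12 * A22⁻¹ * A12ᴴ) A12 A12ᴴ A22
          + ((1 - t : ℝ) : ℂ) • Matrix.fromBlocks (B12 * B22⁻¹ * B12ᴴ) B12 B12ᴴ B22 := by
      have h21 : C12ᴴ = (t : ℂ) • A12ᴴ + ((1 - t : ℝ) : ℂ) • B12ᴴ := by
        rw [hC12]
        simp [conjTranspose_add, conjTranspose_smul, Complex.star_def, Complex.conj_ofReal]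
      have h11 : C11 - S = (t : ℂ) • (A12 * A22⁻¹ * A12ᴴ)
          + ((1 - t : ℝ) : ℂ) • (B12 * B22⁻¹ * B12ᴴ) := by
        rw [hC11, hS]
        simp only [smul_sub]
        abel
      rw [h21, h11, Matrix.fromBlocks_smul, Matrix.fromBlocks_smul, Matrix.fromBlocks_add]
    rw [heq]
    exact (smul_psd t ht0 hXpsd).add (smul_psd (1 - t) (by linarith) hYpsd)
  have : C11 - C12 * C22⁻¹ * C12ᴴ - S = C11 - S - C12 * C22⁻¹ * C12ᴴ := by
    abel
  rw [this]
  exact key
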